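/- Three-point lemma with strong convexity: Let Y be a nonempty closed convex subset of a real inner product space, g : Y → ℝ be μ-strongly convex (μ ≥ 0) in the sense that g(y) − g(ȳ') − ⟨∇g(ȳ'), y − ȳ'⟩ ≥ (μ/2)‖y − ȳ'‖² for all y, ȳ' ∈ Y, and let τ > 0, ȳ ∈ Y, π a vector. If ŷ minimizes y ↦ ⟨π, y⟩ + g(y) + (τ/2)‖ȳ − y‖² over Y, then for all y ∈ Y: ⟨π, ŷ − y⟩ + g(ŷ) − g(y) ≤ (τ/2)‖ȳ − y‖² − ((τ+μ)/2)‖ŷ − y‖² − (τ/2)‖ȳ − ŷ‖². -/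
import Mathlib

set_option maxHeartbeats 1000000


open RealInnerProductSpace

theorem three_point_lemma_strong_convex {n : ℕ}
    (Y : Set (EuclideanSpace ℝ (Fin n)))
    (hne : Y.Nonempty) (hcl : IsClosed Y) (hconv : Convex ℝ Y)
    (g : EuclideanSpace ℝ (Fin n) → ℝ)
    (gradg : EuclideanSpace ℝ (Fin n) → EuclideanSpace ℝ (Fin n))
    (μ : ℝ) (hμ : 0 ≤ μ)
    (hstrong : ∀ y ∈ Y, ∀ ybar' ∈ Y,
      g y - g ybar' - ⟪gradg ybar', y - ybar'⟫ ≥ μ / 2 * ‖y - ybar'‖ ^ 2)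
    (π ybar yhat : EuclideanSpace ℝ (Fin n)) (τ : ℝ) (hτ : 0 < τ)
    (hyhat : yhat ∈ Y)
    (hmin : ∀ y ∈ Y, ⟪π, yhat⟫ + g yhat + τ / 2 * ‖ybar - yhat‖ ^ 2 ≤
      ⟪π, y⟫ + g y + τ / 2 * ‖ybar - y‖ ^ 2) :
    ∀ y ∈ Y, ⟪π, yhat - y⟫ + g yhat - g y ≤
      τ / 2 * ‖ybar - y‖ ^ 2 - (τ + μ) / 2 * ‖yhat - y‖ ^ 2
        - τ / 2 * ‖ybar - yhat‖ ^ 2 := by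
  intro y hy
  set b : EuclideanSpace ℝ (Fin n) := y - yhat with hbdef
  set a : EuclideanSpace ℝ (Fin n) := ybar - yhat with hadef
  set A : ℝ := ⟪π, b⟫ + g y - g yhat - μ / 2 * ‖b‖ ^ 2 - τ * ⟪a, b⟫ with hAdef
  set B : ℝ := (μ + τ) / 2 * ‖b‖ ^ 2 with hBdef
  have key : ∀ t : ℝ, 0 < t → t ≤ 1 → 0 ≤ A + t * B := by
    intro t ht ht1
    set z : EuclideanSpace ℝ (Fin n) := yhat + t • b with hzdef
    have hz : z ∈ Y := by
      have h := hconv hyhat hy (by linarith : (0:ℝ) ≤ 1 - t) ht.le (by ring)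
      have : (1 - t) • yhat + t • y = z := by
        rw [hzdef, hbdef]; module
      rwa [this] at h
    have hmin' := hmin z hz
    have h1 := hstrong yhat hyhat z hz
    have h2 := hstrong y hy z hz
    have e1 : yhat - z = (-t) • b := by rw [hzdef]; module
    have e2 : y - z = (1 - t) • b := by rw [hzdef, hbdef]; module
    have hn1 : ‖yhat - z‖ ^ 2 = t ^ 2 * ‖b‖ ^ 2 := by
      rw [e1, norm_smul]
      simp [abs_of_pos ht, mul_pow]
    have hn2 : ‖y - z‖ ^ 2 = (1 - t) ^ 2 * ‖b‖ ^ 2 := by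
      rw [e2, norm_smul]
      rw [Real.norm_eq_abs, abs_of_nonneg (by linarith : (0:ℝ) ≤ 1 - t), mul_pow]
    have hi1 : ⟪gradg z, yhat - z⟫ = (-t) * ⟪gradg z, b⟫ := by
      rw [e1, real_inner_smul_right]
    have hi2 : ⟪gradg z, y - z⟫ = (1 - t) * ⟪gradg z, b⟫ := by
      rw [e2, real_inner_smul_right]
    rw [hn1, hi1] at h1
    rw [hn2, hi2] at h2
    have hπz : ⟪π, z⟫ = ⟪π, yhat⟫ + t * ⟪π, b⟫ := by
      rw [hzdef, inner_add_right, real_inner_smul_right]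
    have hnz : ‖ybar - z‖ ^ 2 = ‖a‖ ^ 2 - 2 * (t * ⟪a, b⟫) + t ^ 2 * ‖b‖ ^ 2 := by
      have e3 : ybar - z = a - t • b := by rw [hzdef, hadef]; module
      rw [e3, norm_sub_sq_real, real_inner_smul_right, norm_smul, Real.norm_eq_abs,
        abs_of_pos ht, mul_pow]
    rw [hπz, hnz] at hmin'
    rw [hAdef, hBdef]
    -- abstract all inner products and norms to reals
    generalize hc : ⟪gradg z, b⟫ = c at h1 h2
    generalize hp : ⟪π, b⟫ = p at hmin'
    generalize hq : ⟪a, b⟫ = q at hmin'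
    generalize hnb : ‖b‖ ^ 2 = nb at h1 h2 hmin' ⊢
    generalize hna : ‖a‖ ^ 2 = na at hmin'
    generalize hgy : g y = Gy at h2 hmin' ⊢
    generalize hgyh : g yhat = Gyh at h1 hmin' ⊢
    generalize hgz : g z = Gz at h1 h2 hmin'
    generalize hpy : ⟪π, yhat⟫ = py at hmin'
    -- combine: Gz ≤ (1-t) Gyh + t Gy - μ/2 t(1-t) nb
    have hA1 := mul_le_mul_of_nonneg_left h1 (by linarith : (0:ℝ) ≤ 1 - t)
    have hA2 := mul_le_mul_of_nonneg_left h2 ht.le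
    have hgzle : Gz ≤ (1 - t) * Gyh + t * Gy - μ / 2 * (t * (1 - t)) * nb := by
      ring_nf at hA1 hA2 ⊢
      linarith [hA1, hA2]
    have ht' : 0 ≤ t * ((p + Gy - Gyh - μ / 2 * nb - τ * q) + t * ((μ + τ) / 2 * nb)) := by
      ring_nf at hmin' hgzle ⊢
      linarith [hmin', hgzle]
    have := le_of_mul_le_mul_left
      (by linarith [ht'] : t * 0 ≤ t * (p + Gy - Gyh - μ / 2 * nb - τ * q + t * ((μ + τ) / 2 * nb))) ht
    linarith [this]
  have hA : 0 ≤ A := by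
    have htend : Filter.Tendsto (fun t : ℝ => A + t * B) (nhdsWithin 0 (Set.Ioi 0)) (nhds A) := by
      have : Filter.Tendsto (fun t : ℝ => A + t * B) (nhds 0) (nhds (A + 0 * B)) :=
        (continuous_const.add (continuous_id.mul continuous_const)).tendsto 0
      simpa using this.mono_left nhdsWithin_le_nhds
    refine ge_of_tendsto htend ?_
    filter_upwards [Ioc_mem_nhdsGT_of_mem (by norm_num : (0:ℝ) ∈ Set.Ico 0 1)] with t ht
    exact key t ht.1 ht.2
  -- three point identity
  have hid : ‖ybar - y‖ ^ 2 = ‖a‖ ^ 2 - 2 * ⟪a, b⟫ + ‖b‖ ^ 2 := by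
    have e : ybar - y = a - b := by rw [hadef, hbdef]; module
    rw [e, norm_sub_sq_real]
  have hn : ‖yhat - y‖ ^ 2 = ‖b‖ ^ 2 := by
    rw [hbdef, norm_sub_rev]
  have hip : ⟪π, yhat - y⟫ = -⟪π, b⟫ := by
    have e : yhat - y = -b := by rw [hbdef]; module
    rw [e, inner_neg_right]
  rw [hid, hn, hip]
  rw [hAdef] at hA
  linarith [hA]
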